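/- Let 𝔄 be a unital C*-algebra, π : 𝔄 → B(H) a unital *-homomorphism that is irreducible in the sense that every nonzero vector ξ ∈ H is cyclic (the closure of {π(b)ξ : b ∈ 𝔄} is H), and A ⊆ 𝔄 a subalgebra such that A + A* is norm-dense in 𝔄. Assume there exists a masa M ⊆ B(H) contained in the closure of π(A) in the weak operator topology. Then the lattice of closed subspaces of H invariant under π(A) is totally ordered: for any two closed subspaces U, V of H with π(a)(U) ⊆ U and π(a)(V) ⊆ V for all a ∈ A, either U ⊆ V or V ⊆ U. -/

import Mathlib

open scoped InnerProductSpace CStarAlgebra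

/-- A unital C*-algebra `𝔄`, a unital *-homomorphism `π : 𝔄 → B(H)` which is irreducible
(every nonzero vector is cyclic), and a subalgebra `S ⊆ 𝔄` with `S + S*` norm-dense in `𝔄`
(`S` is Dirichlet in `𝔄`).  If some masa `M` of `B(H)` (a unital *-subalgebra equal to its
own commutant) is contained in the closure of `π(S)` in the weak operator topology, then the
closed `π(S)`-invariant subspaces of `H` are totally ordered. -/
theorem dirichlet_invariant_subspaces_totally_ordered
    {𝔄 : Type*} [NormedRing 𝔄] [StarRing 𝔄] [CStarRing 𝔄]
    [NormedAlgebra ℂ 𝔄] [CompleteSpace 𝔄] [StarModule ℂ 𝔄]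
    {H : Type*} [NormedAddCommGroup H] [InnerProductSpace ℂ H] [CompleteSpace H]
    (π : 𝔄 →⋆ₐ[ℂ] (H →L[ℂ] H))
    (hirr : ∀ ξ : H, ξ ≠ 0 → Dense (Set.range fun b : 𝔄 => π b ξ))
    (S : Subalgebra ℂ 𝔄)
    (hdir : Dense {x : 𝔄 | ∃ a ∈ S, ∃ b ∈ S, x = a + star b})
    (M : StarSubalgebra ℂ (H →L[ℂ] H))
    (hmasa : ∀ T : H →L[ℂ] H, T ∈ M ↔ ∀ R ∈ M, T * R = R * T)
    (hMwot : ∀ T ∈ M, (ContinuousLinearMapWOT.ofCLM : (H →L[ℂ] H) → H →WOT[ℂ] H) T ∈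
      closure ((ContinuousLinearMapWOT.ofCLM : (H →L[ℂ] H) → H →WOT[ℂ] H) '' ((π : 𝔄 → H →L[ℂ] H) '' (S : Set 𝔄))))
    (U V : Submodule ℂ H) (hUc : IsClosed (U : Set H)) (hVc : IsClosed (V : Set H))
    (hU : ∀ a ∈ S, ∀ ξ ∈ U, π a ξ ∈ U) (hV : ∀ a ∈ S, ∀ ξ ∈ V, π a ξ ∈ V) :
    U ≤ V ∨ V ≤ U := by
  classical
  letI : CStarAlgebra 𝔄 :=
    { ‹NormedRing 𝔄›, ‹StarRing 𝔄›, ‹CStarRing 𝔄›, ‹NormedAlgebra ℂ 𝔄›,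
      ‹CompleteSpace 𝔄›, ‹StarModule ℂ 𝔄› with }
  haveI : CompleteSpace U := hUc.completeSpace_coe
  haveI : CompleteSpace V := hVc.completeSpace_coe
  -- every `T ∈ M` leaves a closed invariant subspace invariant
  have key : ∀ (W : Submodule ℂ H), IsClosed (W : Set H) →
      (∀ a ∈ S, ∀ ξ ∈ W, π a ξ ∈ W) → ∀ T ∈ M, ∀ ξ ∈ W, T ξ ∈ W := by
    intro W hWc hW T hT ξ hξ
    haveI : CompleteSpace W := hWc.completeSpace_coe
    have h1 : ∀ η ∈ Wᗮ, ⟪η, T ξ⟫_ℂ = 0 := by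
      intro η hη
      have hcont : Continuous fun A : (H →WOT[ℂ] H) => ⟪η, A ξ⟫_ℂ :=
        ContinuousLinearMapWOT.continuous_dual_apply ξ (innerSL ℂ η)
      have hC : IsClosed {A : H →WOT[ℂ] H | ⟪η, A ξ⟫_ℂ = 0} :=
        isClosed_singleton.preimage hcont
      have hsub : (ContinuousLinearMapWOT.ofCLM : (H →L[ℂ] H) → H →WOT[ℂ] H) '' ((π : 𝔄 → H →L[ℂ] H) '' (S : Set 𝔄))
          ⊆ {A : H →WOT[ℂ] H | ⟪η, A ξ⟫_ℂ = 0} := by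
        rintro _ ⟨_, ⟨a, ha, rfl⟩, rfl⟩
        simpa [ContinuousLinearMapWOT.ofCLM_apply] using
          (Submodule.mem_orthogonal' W η).mp hη _ (hW a ha ξ hξ)
      have := closure_minimal hsub hC (hMwot T hT)
      simpa [ContinuousLinearMapWOT.ofCLM_apply] using this
    have : T ξ ∈ Wᗮᗮ := by
      rw [Submodule.mem_orthogonal']
      intro u hu
      rw [← inner_conj_symm, h1 u hu, map_zero]
    rwa [Submodule.orthogonal_orthogonal] at this
  -- every `T ∈ M` also leaves the orthogonal complement invariant
  have keyO : ∀ (W : Submodule ℂ H), IsClosed (W : Set H) →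
      (∀ a ∈ S, ∀ ξ ∈ W, π a ξ ∈ W) → ∀ T ∈ M, ∀ η ∈ Wᗮ, T η ∈ Wᗮ := by
    intro W hWc hW T hT η hη
    rw [Submodule.mem_orthogonal]
    intro u hu
    have : ⟪(star T) u, η⟫_ℂ = 0 :=
      (Submodule.mem_orthogonal W η).mp hη _ (key W hWc hW (star T) (star_mem hT) u hu)
    rwa [ContinuousLinearMap.star_eq_adjoint, ContinuousLinearMap.adjoint_inner_left] at this
  -- the orthogonal projection onto a closed invariant subspace lies in `M`
  have projM : ∀ (W : Submodule ℂ H) (hWc : IsClosed (W : Set H)),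
      (∀ a ∈ S, ∀ ξ ∈ W, π a ξ ∈ W) →
      haveI : CompleteSpace W := hWc.completeSpace_coe
      (W.subtypeL ∘L W.orthogonalProjectionOnto) ∈ M := by
    intro W hWc hW
    haveI : CompleteSpace W := hWc.completeSpace_coe
    set P : H →L[ℂ] H := W.subtypeL ∘L W.orthogonalProjectionOnto with hP
    have hPmem : ∀ ξ : H, P ξ ∈ W := fun ξ => SetLike.coe_mem _
    have hPid : ∀ ξ ∈ W, P ξ = ξ := fun ξ hξ => Submodule.starProjection_eq_self_iff.mpr hξ
    have hPzero : ∀ ξ ∈ Wᗮ, P ξ = 0 := by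
      intro ξ hξ
      simp only [hP, ContinuousLinearMap.comp_apply,
        Submodule.orthogonalProjectionOnto_apply_of_mem_orthogonal hξ]
      simp
    rw [hmasa]
    intro R hR
    ext ξ
    have hdecomp : ξ = P ξ + (ξ - P ξ) := by abel
    have hsubmem : ξ - P ξ ∈ Wᗮ := Submodule.sub_starProjection_mem_orthogonal ξ
    have h2 : P (R ξ) = R (P ξ) := by
      conv_lhs => rw [hdecomp]
      rw [map_add, map_add]
      rw [hPid _ (key W hWc hW R hR _ (hPmem ξ)),
        hPzero _ (keyO W hWc hW R hR _ hsubmem), add_zero]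
    simpa [ContinuousLinearMap.mul_apply] using h2
  set P : H →L[ℂ] H := U.subtypeL ∘L U.orthogonalProjectionOnto with hPdef
  set Q : H →L[ℂ] H := V.subtypeL ∘L V.orthogonalProjectionOnto with hQdef
  have hPM : P ∈ M := projM U hUc hU
  have hQM : Q ∈ M := projM V hVc hV
  have hcomm : P * Q = Q * P := (hmasa P).mp hPM Q hQM
  by_contra hcon
  push_neg at hcon
  obtain ⟨hUV, hVU⟩ := hcon
  obtain ⟨u, huU, huV⟩ := SetLike.not_le_iff_exists.mp hUV
  obtain ⟨v, hvV, hvU⟩ := SetLike.not_le_iff_exists.mp hVU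
  have hPmemU : ∀ ξ : H, P ξ ∈ U := fun ξ => SetLike.coe_mem _
  have hQmemV : ∀ ξ : H, Q ξ ∈ V := fun ξ => SetLike.coe_mem _
  have hPid : ∀ ξ ∈ U, P ξ = ξ := fun ξ hξ => Submodule.starProjection_eq_self_iff.mpr hξ
  have hQid : ∀ ξ ∈ V, Q ξ = ξ := fun ξ hξ => Submodule.starProjection_eq_self_iff.mpr hξ
  -- the vectors ξ ∈ U ∩ Vᗮ and η ∈ V ∩ Uᗮ
  set ξ := u - Q u with hξdef
  set η := v - P v with hηdef
  have hQuU : Q u ∈ U := by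
    have : Q (P u) = P (Q u) := by
      simpa [ContinuousLinearMap.mul_apply] using congrArg (fun T : H →L[ℂ] H => T u) hcomm.symm
    rw [hPid u huU] at this
    rw [this]; exact hPmemU _
  have hPvV : P v ∈ V := by
    have : P (Q v) = Q (P v) := by
      simpa [ContinuousLinearMap.mul_apply] using congrArg (fun T : H →L[ℂ] H => T v) hcomm
    rw [hQid v hvV] at this
    rw [this]; exact hQmemV _
  have hξU : ξ ∈ U := U.sub_mem huU hQuU
  have hηV : η ∈ V := V.sub_mem hvV hPvV
  have hξVp : ξ ∈ Vᗮ := Submodule.sub_starProjection_mem_orthogonal u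
  have hηUp : η ∈ Uᗮ := Submodule.sub_starProjection_mem_orthogonal v
  have hξne : ξ ≠ 0 := by
    intro h
    apply huV
    have : u = Q u := by rwa [hξdef, sub_eq_zero] at h
    rw [this]; exact hQmemV _
  have hηne : η ≠ 0 := by
    intro h
    apply hvU
    have : v = P v := by rwa [hηdef, sub_eq_zero] at h
    rw [this]; exact hPmemU _
  -- ⟪η, π x ξ⟫ = 0 for all x in the dense Dirichlet set, hence for all x
  have hvanish : ∀ x : 𝔄, ⟪η, π x ξ⟫_ℂ = 0 := by
    have hcontπ : Continuous fun x : 𝔄 => ⟪η, π x ξ⟫_ℂ := by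
      have h1 : Continuous (π : 𝔄 → H →L[ℂ] H) := map_continuous π
      exact continuous_const.inner ((ContinuousLinearMap.apply ℂ H ξ).continuous.comp h1)
    have hclosed : IsClosed {x : 𝔄 | ⟪η, π x ξ⟫_ℂ = 0} := isClosed_singleton.preimage hcontπ
    have hsub : {x : 𝔄 | ∃ a ∈ S, ∃ b ∈ S, x = a + star b} ⊆ {x : 𝔄 | ⟪η, π x ξ⟫_ℂ = 0} := by
      rintro _ ⟨a, ha, b, hb, rfl⟩
      have h1 : ⟪η, π a ξ⟫_ℂ = 0 :=
        (Submodule.mem_orthogonal' U η).mp hηUp _ (hU a ha ξ hξU)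
      have h2 : ⟪η, π (star b) ξ⟫_ℂ = 0 := by
        rw [map_star, ContinuousLinearMap.star_eq_adjoint,
          ContinuousLinearMap.adjoint_inner_right]
        exact (Submodule.mem_orthogonal V ξ).mp hξVp _ (hV b hb η hηV)
      simp only [Set.mem_setOf_eq, map_add, ContinuousLinearMap.add_apply, inner_add_right,
        h1, h2, add_zero]
    have : (Set.univ : Set 𝔄) ⊆ {x : 𝔄 | ⟪η, π x ξ⟫_ℂ = 0} := by
      rw [← hdir.closure_eq]
      exact closure_minimal hsub hclosed
    exact fun x => this (Set.mem_univ x)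
  -- but ξ is cyclic, so η must be 0
  have hdense := hirr ξ hξne
  have hallzero : ∀ y : H, ⟪η, y⟫_ℂ = 0 := by
    have hclosed : IsClosed {y : H | ⟪η, y⟫_ℂ = 0} :=
      isClosed_singleton.preimage (continuous_const.inner continuous_id)
    have hsub : Set.range (fun b : 𝔄 => π b ξ) ⊆ {y : H | ⟪η, y⟫_ℂ = 0} := by
      rintro _ ⟨b, rfl⟩; exact hvanish b
    have : (Set.univ : Set H) ⊆ {y : H | ⟪η, y⟫_ℂ = 0} := by
      rw [← hdense.closure_eq]
      exact closure_minimal hsub hclosed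
    exact fun y => this (Set.mem_univ y)
  exact hηne (inner_self_eq_zero.mp (hallzero η))
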